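/- Let d ≥ 3 and let G be a subgroup of the symmetric group on Fin d that acts transitively on Fin d. If G contains a permutation σ that is a (d−1)-cycle (i.e. σ has exactly one nontrivial cycle and that cycle has length d−1, equivalently Equiv.Perm.cycleType σ = {d−1}), then the action of G on Fin d is primitive, i.e. every block of G is trivial. -/

import Mathlib

open Pointwise


/-- A transitive subgroup of the symmetric group on `Fin d` (`d ≥ 3`) that contains a
`(d-1)`-cycle is primitive: every block is trivial. -/
theorem primitive_of_contains_d_minus_one_cycle (d : ℕ) (hd : 3 ≤ d)
    (G : Subgroup (Equiv.Perm (Fin d)))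
    (htrans : MulAction.IsPretransitive G (Fin d))
    (σ : Equiv.Perm (Fin d)) (hσG : σ ∈ G)
    (hσ : Equiv.Perm.cycleType σ = {d - 1}) :
    ∀ Λ : Set (Fin d), MulAction.IsBlock G Λ → MulAction.IsTrivialBlock Λ := by
  classical
  intro Λ hΛ
  by_contra hcontra
  rw [MulAction.IsTrivialBlock, not_or, Set.not_subsingleton_iff] at hcontra
  obtain ⟨⟨x, hx, y, hy, hxy⟩, hne⟩ := hcontra
  -- support of σ has card d - 1
  have hsupp : σ.support.card = d - 1 := by
    have := Equiv.Perm.sum_cycleType σ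
    rw [hσ] at this
    simpa using this.symm
  -- σ is a cycle
  have hcyc : σ.IsCycle := by
    rw [← Equiv.Perm.card_cycleType_eq_one, hσ]; simp
  -- exactly one fixed point a
  have hcompl : σ.supportᶜ.card = 1 := by
    rw [Finset.card_compl, hsupp, Fintype.card_fin]
    omega
  obtain ⟨a, ha⟩ := Finset.card_eq_one.mp hcompl
  have hmem : ∀ b : Fin d, b ∉ σ.support ↔ b = a := by
    intro b
    rw [← Finset.mem_compl, ha, Finset.mem_singleton]
  have hσa : σ a = a := by
    have : a ∉ σ.support := (hmem a).mpr rfl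
    rwa [Equiv.Perm.notMem_support] at this
  -- translate Λ so that it contains a
  obtain ⟨g, hg⟩ := htrans.exists_smul_eq x a
  set Λ' : Set (Fin d) := g • Λ with hΛ'def
  have hΛ' : MulAction.IsBlock G Λ' := hΛ.translate g
  have haΛ' : a ∈ Λ' := ⟨x, hx, hg⟩
  have hbΛ' : (g • y : Fin d) ∈ Λ' := ⟨y, hy, rfl⟩
  set b : Fin d := g • y with hbdef
  have hba : b ≠ a := by
    rw [← hg]
    intro h
    exact hxy (smul_left_cancel g h).symm
  -- σ stabilizes Λ'
  set σg : G := ⟨σ, hσG⟩ with hσgdef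
  have hstab : σg • Λ' = Λ' := by
    rcases hΛ'.smul_eq_or_disjoint σg with h | h
    · exact h
    · exfalso
      have : a ∈ σg • Λ' := by
        refine ⟨a, haΛ', ?_⟩
        show σ a = a
        exact hσa
      exact h.ne_of_mem this haΛ' rfl
  have hstabz : ∀ n : ℤ, σg ^ n • Λ' = Λ' := by
    intro n
    have : σg ∈ MulAction.stabilizer G Λ' := hstab
    exact zpow_mem this n
  -- every point is in Λ'
  have huniv : Λ' = Set.univ := by
    apply Set.eq_univ_of_forall
    intro c
    by_cases hc : c = a
    · rwa [hc]
    · have hbs : σ b ≠ b := by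
        have : b ∈ σ.support := by
          by_contra h
          exact hba ((hmem b).mp h)
        rwa [Equiv.Perm.mem_support] at this
      have hcs : σ c ≠ c := by
        have : c ∈ σ.support := by
          by_contra h
          exact hc ((hmem c).mp h)
        rwa [Equiv.Perm.mem_support] at this
      obtain ⟨n, hn⟩ := hcyc.sameCycle hbs hcs
      have : σg ^ n • b ∈ σg ^ n • Λ' := Set.smul_mem_smul_set hbΛ'
      rw [hstabz n] at this
      have hcoe : (σg ^ n • b : Fin d) = (σ ^ n) b := by
        have : ((σg ^ n : G) : Equiv.Perm (Fin d)) = σ ^ n := by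
          simp [hσgdef]
        show ((σg ^ n : G) : Equiv.Perm (Fin d)) b = (σ ^ n) b
        rw [this]
      rwa [hcoe, hn] at this
  -- conclude Λ = univ, contradiction
  apply hne
  have : Λ = g⁻¹ • Λ' := by
    rw [hΛ'def, inv_smul_smul]
  rw [this, huniv, Set.smul_set_univ]
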